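/- Let S ⊆ ℤ² ⊆ ℝ² be finite, let 0 < ε < 1, and let G = (S, E) be a Euclidean (1+ε)-spanner for S. Let a, b ∈ S be distinct points such that (i) the open segment between a and b contains no point of ℤ² (i.e. b − a is a primitive lattice vector), and (ii) every point of S whose distance from the line through a and b is at most (1/2)·√(2ε+ε²)·‖a − b‖ lies on the line through a and b. Then the edge {a, b} belongs to E. -/

import Mathlib

/-- `G = (S, E)` is a Euclidean `(1+ε)`-spanner for `S`. -/
def IsSpanner (S : Set (EuclideanSpace ℝ (Fin 2)))
    (E : Finset (Sym2 (EuclideanSpace ℝ (Fin 2)))) (ε : ℝ) : Prop :=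
  (∀ e ∈ E, ¬ e.IsDiag ∧ ∀ x ∈ e, x ∈ S) ∧
  ∀ p ∈ S, ∀ q ∈ S, ∃ (m : ℕ) (x : Fin (m + 1) → EuclideanSpace ℝ (Fin 2)),
    x 0 = p ∧ x (Fin.last m) = q ∧ (∀ i, x i ∈ S) ∧
    (∀ i : Fin m, s(x i.castSucc, x i.succ) ∈ E) ∧
    ∑ i : Fin m, dist (x i.castSucc) (x i.succ) ≤ (1 + ε) * dist p q

/-- A point of the plane is a lattice point if both coordinates are integers. -/
def IsLatticePoint (x : EuclideanSpace ℝ (Fin 2)) : Prop :=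
  ∃ s t : ℤ, x 0 = s ∧ x 1 = t

lemma path_bound {α} [PseudoMetricSpace α] (f : ℕ → α) (n i : ℕ) (hi : i ≤ n) :
    dist (f 0) (f i) + dist (f i) (f n) ≤ ∑ j ∈ Finset.range n, dist (f j) (f (j+1)) := by
  have h1 : dist (f 0) (f i) ≤ ∑ j ∈ Finset.range i, dist (f j) (f (j+1)) :=
    dist_le_range_sum_dist f i
  have h2 : dist (f i) (f n) ≤ ∑ j ∈ Finset.Ico i n, dist (f j) (f (j+1)) := by
    rw [Finset.sum_Ico_eq_sum_range]
    have := dist_le_range_sum_dist (fun j => f (i + j)) (n - i)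
    simp only [Nat.add_zero, Nat.add_sub_cancel' hi] at this
    exact this
  calc dist (f 0) (f i) + dist (f i) (f n)
      ≤ (∑ j ∈ Finset.range i, dist (f j) (f (j+1))) + ∑ j ∈ Finset.Ico i n, dist (f j) (f (j+1)) :=
        add_le_add h1 h2
    _ = _ := Finset.sum_range_add_sum_Ico _ hi

lemma minkowski_aux (d t L c : ℝ)
    (h : Real.sqrt (d^2 + (t*L)^2) + Real.sqrt (d^2 + ((1-t)*L)^2) ≤ c) :
    L^2 + 4*d^2 ≤ c^2 := by
  have hc : 0 ≤ c := le_trans (by positivity) h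
  have key : ‖(((L:ℝ):ℂ) + ((2*d : ℝ):ℂ)*Complex.I)‖ ≤ c := by
    have heq : (((L:ℝ):ℂ) + ((2*d:ℝ):ℂ)*Complex.I)
        = (((t*L:ℝ):ℂ) + ((d:ℝ):ℂ)*Complex.I) + ((((1-t)*L:ℝ):ℂ) + ((d:ℝ):ℂ)*Complex.I) := by
      push_cast; ring
    rw [heq]
    refine le_trans (norm_add_le _ _) ?_
    rw [Complex.norm_add_mul_I, Complex.norm_add_mul_I, add_comm ((t*L)^2), add_comm (((1-t)*L)^2)]
    exact h
  rw [Complex.norm_add_mul_I] at key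
  nlinarith [Real.sq_sqrt (by positivity : (0:ℝ) ≤ L^2 + (2*d)^2),
    Real.sqrt_nonneg (L^2 + (2*d)^2)]

lemma ellipse_slab {E} [NormedAddCommGroup E] [InnerProductSpace ℝ E] (a b x : E)
    (hab : a ≠ b) (c : ℝ) (h : dist a x + dist x b ≤ c) :
    ∃ p ∈ (affineSpan ℝ ({a, b} : Set E) : Set E),
      (dist a b)^2 + 4*(dist x p)^2 ≤ c^2 := by
  set v := b - a with hv
  have hvne : v ≠ 0 := sub_ne_zero.mpr (Ne.symm hab)
  have hvnorm : ‖v‖ ≠ 0 := norm_ne_zero_iff.mpr hvne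
  set t : ℝ := (inner ℝ (x - a) v : ℝ) / ‖v‖^2 with ht
  set p : E := t • v + a with hp
  have hpmem : p ∈ (affineSpan ℝ ({a, b} : Set E) : Set E) := by
    have h0 := AffineMap.lineMap_mem_affineSpan_pair (k := ℝ) t a b
    rw [AffineMap.lineMap_apply_module] at h0
    have : p = (1 - t) • a + t • b := by rw [hp, hv]; module
    rwa [this]
  refine ⟨p, hpmem, ?_⟩
  set d : ℝ := ‖x - p‖ with hd
  have horth : (inner ℝ (x - p) v : ℝ) = 0 := by
    have hxp : x - p = (x - a) - t • v := by rw [hp]; abel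
    rw [hxp, inner_sub_left, real_inner_smul_left, real_inner_self_eq_norm_sq, ht,
      div_mul_cancel₀ _ (pow_ne_zero 2 hvnorm)]
    ring
  have h1 : ‖x - a‖^2 = d^2 + (t*‖v‖)^2 := by
    have hxa : x - a = (x - p) + t • v := by rw [hp]; abel
    rw [hxa, norm_add_sq_real, real_inner_smul_right, horth, norm_smul]
    rw [Real.norm_eq_abs, mul_pow, sq_abs]
    ring
  have h2 : ‖x - b‖^2 = d^2 + ((1-t)*‖v‖)^2 := by
    have hxb : x - b = (x - p) + (t - 1) • v := by
      rw [hp, hv, sub_smul, one_smul]; abel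
    rw [hxb, norm_add_sq_real, real_inner_smul_right, horth, norm_smul]
    rw [Real.norm_eq_abs, mul_pow, sq_abs]
    ring
  have hL : dist a b = ‖v‖ := by rw [dist_eq_norm, hv, norm_sub_rev]
  have hda : dist a x = Real.sqrt (d^2 + (t*‖v‖)^2) := by
    rw [dist_comm, dist_eq_norm, ← h1, Real.sqrt_sq (norm_nonneg _)]
  have hdb : dist x b = Real.sqrt (d^2 + ((1-t)*‖v‖)^2) := by
    rw [dist_eq_norm, ← h2, Real.sqrt_sq (norm_nonneg _)]
  have := minkowski_aux d t ‖v‖ c (by rw [← hda, ← hdb]; exact h)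
  rw [hL, dist_eq_norm]
  exact this

lemma lineMap_coord (a b : EuclideanSpace ℝ (Fin 2)) (t : ℝ) (i : Fin 2) :
    (AffineMap.lineMap a b t : EuclideanSpace ℝ (Fin 2)) i = t * (b i - a i) + a i := by
  rw [AffineMap.lineMap_apply_module]
  simp [PiLp.add_apply, PiLp.smul_apply, PiLp.sub_apply]
  ring

lemma lineMap_int (a b : EuclideanSpace ℝ (Fin 2)) (hab : a ≠ b)
    (ha : IsLatticePoint a) (hb : IsLatticePoint b)
    (hseg : ∀ x ∈ openSegment ℝ a b, ¬ IsLatticePoint x)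
    (t : ℝ) (hx : IsLatticePoint (AffineMap.lineMap a b t)) : ∃ k : ℤ, t = k := by
  obtain ⟨a0, a1, ha0, ha1⟩ := ha
  obtain ⟨b0, b1, hb0, hb1⟩ := hb
  obtain ⟨s0, s1, hs0, hs1⟩ := hx
  rw [lineMap_coord] at hs0 hs1
  have hm0 : t * ((b0:ℝ) - a0) = (s0:ℝ) - a0 := by
    rw [ha0, hb0] at hs0; linarith
  have hm1 : t * ((b1:ℝ) - a1) = (s1:ℝ) - a1 := by
    rw [ha1, hb1] at hs1; linarith
  have hvne : ¬ (b0 - a0 = 0 ∧ b1 - a1 = 0) := by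
    rintro ⟨h0, h1⟩
    apply hab
    have e0 : b0 = a0 := by omega
    have e1 : b1 = a1 := by omega
    ext i
    fin_cases i
    · show a 0 = b 0; rw [ha0, hb0, e0]
    · show a 1 = b 1; rw [ha1, hb1, e1]
  set g : ℕ := Int.gcd (b0 - a0) (b1 - a1) with hg
  have hgne : g ≠ 0 := by
    rw [hg, Ne, Int.gcd_eq_zero_iff]; exact hvne
  have hg1 : g = 1 := by
    by_contra hne
    have hg2 : 2 ≤ (g : ℝ) := by exact_mod_cast (by omega : 2 ≤ g)
    have hgpos : (0:ℝ) < g := by linarith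
    apply hseg (AffineMap.lineMap a b (1 / (g:ℝ)))
    · rw [openSegment_eq_image_lineMap]
      refine ⟨1 / (g:ℝ), ⟨by positivity, by rw [div_lt_one hgpos]; linarith⟩, rfl⟩
    · obtain ⟨c0, hc0⟩ : (g : ℤ) ∣ (b0 - a0) := Int.gcd_dvd_left _ _
      obtain ⟨c1, hc1⟩ : (g : ℤ) ∣ (b1 - a1) := Int.gcd_dvd_right _ _
      have hc0' : ((b0 : ℝ) - a0) = (g:ℝ) * c0 := by exact_mod_cast congrArg Int.cast hc0
      have hc1' : ((b1 : ℝ) - a1) = (g:ℝ) * c1 := by exact_mod_cast congrArg Int.cast hc1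
      refine ⟨c0 + a0, c1 + a1, ?_, ?_⟩
      · rw [lineMap_coord, ha0, hb0]
        push_cast
        rw [hc0']
        field_simp
      · rw [lineMap_coord, ha1, hb1]
        push_cast
        rw [hc1']
        field_simp
  set u' := Int.gcdA (b0 - a0) (b1 - a1) with hu'
  set w' := Int.gcdB (b0 - a0) (b1 - a1) with hw'
  have hbez : (b0 - a0) * u' + (b1 - a1) * w' = 1 := by
    have h := Int.gcd_eq_gcd_ab (b0 - a0) (b1 - a1)
    rw [← hg, hg1] at h
    rw [hu', hw']
    exact_mod_cast h.symm
  have hbezr : ((b0:ℝ) - a0) * u' + ((b1:ℝ) - a1) * w' = 1 := by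
    exact_mod_cast congrArg Int.cast hbez
  refine ⟨(s0 - a0) * u' + (s1 - a1) * w', ?_⟩
  push_cast
  linear_combination (u' : ℝ) * hm0 + (w' : ℝ) * hm1 - t * hbezr

/-- Empty slab condition for lattice point sets: if the open segment `ab` contains no
lattice point, and every point of `S` within distance `(1/2)·√(2ε+ε²)·‖a-b‖` of the line
through `a` and `b` lies on that line, then every Euclidean `(1+ε)`-spanner for `S`
contains the edge `{a,b}`. -/
theorem empty_slab_edge (S : Set (EuclideanSpace ℝ (Fin 2))) (hS : S.Finite)
    (hlat : ∀ x ∈ S, IsLatticePoint x)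
    (ε : ℝ) (hε0 : 0 < ε) (hε1 : ε < 1)
    (E : Finset (Sym2 (EuclideanSpace ℝ (Fin 2)))) (hG : IsSpanner S E ε)
    (a b : EuclideanSpace ℝ (Fin 2)) (ha : a ∈ S) (hb : b ∈ S) (hab : a ≠ b)
    (hseg : ∀ x ∈ openSegment ℝ a b, ¬ IsLatticePoint x)
    (hslab : ∀ x ∈ S,
      Metric.infDist x (affineSpan ℝ {a, b} : Set (EuclideanSpace ℝ (Fin 2))) ≤
        (1 / 2) * Real.sqrt (2 * ε + ε ^ 2) * dist a b →
      x ∈ affineSpan ℝ {a, b}) :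
    s(a, b) ∈ E := by
  obtain ⟨hE, hpath⟩ := hG
  obtain ⟨m, x, hx0, hxl, hxS, hedge, hsum⟩ := hpath a ha b hb
  have hL : 0 < dist a b := dist_pos.mpr hab
  set f : ℕ → EuclideanSpace ℝ (Fin 2) :=
    fun j => x ⟨min j m, Nat.lt_succ_of_le (min_le_right _ _)⟩ with hf
  have hfx : ∀ i : Fin (m+1), f i.1 = x i := fun i =>
    congrArg x (Fin.ext (min_eq_left (Nat.lt_succ_iff.mp i.isLt)))
  have hf0 : f 0 = a := by
    rw [← hx0]; exact congrArg x (Fin.ext (by simp))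
  have hfm : f m = b := by
    rw [← hxl]; exact congrArg x (Fin.ext (by simp [Fin.last]))
  have hsum' : ∑ j ∈ Finset.range m, dist (f j) (f (j+1))
      = ∑ i : Fin m, dist (x i.castSucc) (x i.succ) := by
    rw [← Fin.sum_univ_eq_sum_range]
    refine Finset.sum_congr rfl fun i _ => ?_
    congr 1
    · exact congrArg x (Fin.ext (min_eq_left (le_of_lt i.isLt)))
    · exact congrArg x (Fin.ext (min_eq_left i.isLt))
  have hell : ∀ i : Fin (m+1), dist a (x i) + dist (x i) b ≤ (1 + ε) * dist a b := by
    intro i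
    have := path_bound f m i.1 (Nat.lt_succ_iff.mp i.isLt)
    rw [hf0, hfm, hfx i, hsum'] at this
    exact le_trans this hsum
  have hline : ∀ i : Fin (m+1), ∃ k : ℤ, x i = AffineMap.lineMap a b (k:ℝ) := by
    intro i
    obtain ⟨p, hpmem, hineq⟩ := ellipse_slab a b (x i) hab ((1+ε)*dist a b) (hell i)
    have hs : Real.sqrt (2*ε+ε^2)^2 = 2*ε+ε^2 := Real.sq_sqrt (by positivity)
    have hw : dist (x i) p ≤ (1/2) * Real.sqrt (2*ε+ε^2) * dist a b := by
      have hd2 : (dist (x i) p)^2 ≤ ((1/2)*Real.sqrt (2*ε+ε^2)*dist a b)^2 := by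
        nlinarith [hineq, hs, dist_nonneg (x := a) (y := b)]
      calc dist (x i) p = Real.sqrt ((dist (x i) p)^2) := (Real.sqrt_sq dist_nonneg).symm
        _ ≤ Real.sqrt (((1/2)*Real.sqrt (2*ε+ε^2)*dist a b)^2) := Real.sqrt_le_sqrt hd2
        _ = (1/2)*Real.sqrt (2*ε+ε^2)*dist a b := Real.sqrt_sq (by positivity)
    have hmem : x i ∈ affineSpan ℝ ({a, b} : Set (EuclideanSpace ℝ (Fin 2))) :=
      hslab (x i) (hxS i) (le_trans (Metric.infDist_le_dist_of_mem hpmem) hw)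
    rw [← vsub_vadd (x i) a] at hmem
    obtain ⟨r, hr⟩ := vadd_left_mem_affineSpan_pair.mp hmem
    have hxr : AffineMap.lineMap a b r = x i := by
      rw [AffineMap.lineMap_apply, hr, vsub_vadd]
    obtain ⟨k, hk⟩ := lineMap_int a b hab (hlat a ha) (hlat b hb) hseg r
      (by rw [hxr]; exact hlat _ (hxS i))
    exact ⟨k, by rw [← hxr, hk]⟩
  choose k hk using hline
  have hinj : Function.Injective (AffineMap.lineMap a b : ℝ →ᵃ[ℝ] _) :=
    AffineMap.lineMap_injective ℝ hab
  have hk0 : (k 0 : ℝ) = 0 := by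
    apply hinj
    rw [AffineMap.lineMap_apply_zero, ← hk 0, hx0]
  have hklast : (k (Fin.last m) : ℝ) = 1 := by
    apply hinj
    rw [AffineMap.lineMap_apply_one, ← hk (Fin.last m), hxl]
  have hmpos : 1 ≤ m := by
    rcases Nat.eq_zero_or_pos m with h | h
    · exfalso
      apply hab
      subst h
      rw [← hx0, ← hxl]
      rfl
    · exact h
  have hstep : ∀ i : Fin m, dist a b ≤ dist (x i.castSucc) (x i.succ) := by
    intro i
    have hne : x i.castSucc ≠ x i.succ := by
      have hd := (hE _ (hedge i)).1
      rw [Sym2.mk_isDiag_iff] at hd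
      exact hd
    have hkne : k i.castSucc ≠ k i.succ := fun h => hne (by rw [hk, hk, h])
    rw [hk i.castSucc, hk i.succ, dist_lineMap_lineMap]
    have h1 : (1:ℝ) ≤ dist ((k i.castSucc : ℝ)) ((k i.succ : ℝ)) := by
      rw [Real.dist_eq]
      have : (1:ℤ) ≤ |k i.castSucc - k i.succ| := Int.one_le_abs (sub_ne_zero.mpr hkne)
      calc (1:ℝ) = ((1:ℤ):ℝ) := by norm_num
        _ ≤ ((|k i.castSucc - k i.succ| : ℤ) : ℝ) := by exact_mod_cast this
        _ = |(k i.castSucc : ℝ) - (k i.succ : ℝ)| := by push_cast; ring_nf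
    nlinarith [h1, hL]
  have hsumge : (m:ℝ) * dist a b ≤ ∑ i : Fin m, dist (x i.castSucc) (x i.succ) := by
    have := Finset.card_nsmul_le_sum Finset.univ
      (fun i : Fin m => dist (x i.castSucc) (x i.succ)) (dist a b) (fun i _ => hstep i)
    simpa [nsmul_eq_mul] using this
  have hm2 : (m:ℝ) < 2 := by
    have h2 : (m:ℝ) * dist a b ≤ (1+ε) * dist a b := le_trans hsumge hsum
    have := le_of_mul_le_mul_right h2 hL
    linarith
  have hm1 : m = 1 := by
    have : m < 2 := by exact_mod_cast hm2
    omega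
  subst hm1
  have h := hedge 0
  rw [show (0:Fin 1).castSucc = 0 from rfl, show (0:Fin 1).succ = Fin.last 1 from rfl,
    hx0, hxl] at h
  exact h
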